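/- Let k ∈ ℕ and z ∈ ℂ. Then the generalized hypergeometric series ₀F₁(−; k + 1/2; z) := ∑'_{l∈ℕ} z^l / ((k + 1/2)_l · l!) and ₀F₁(−; k + 3/2; z) := ∑'_{l∈ℕ} z^l / ((k + 3/2)_l · l!) satisfy the bounds |₀F₁(−; k + 1/2; z)| ≤ exp(2|z|) and |₀F₁(−; k + 3/2; z)| ≤ exp(2|z|/3). -/

import Mathlib

/-- The generalized hypergeometric function `₀F₁(−; q; z) = ∑_{l} z^l / ((q)_l · l!)`,
where `(q)_l` is the Pochhammer (rising factorial) symbol. -/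
noncomputable def hyp0F1 (q : ℝ) (z : ℂ) : ℂ :=
  ∑' l : ℕ, z ^ l / ((((ascPochhammer ℝ l).eval q * (l.factorial : ℝ) : ℝ)) : ℂ)

lemma ascPochhammer_ge_pow (q c : ℝ) (hc : 0 < c) (hq : c ≤ q) (l : ℕ) :
    c ^ l ≤ (ascPochhammer ℝ l).eval q := by
  induction l with
  | zero => simp
  | succ n ih =>
    rw [ascPochhammer_succ_eval, pow_succ]
    have h1 : c ≤ q + n := le_trans hq (le_add_of_nonneg_right (Nat.cast_nonneg n))
    exact mul_le_mul ih h1 hc.le (ascPochhammer_pos n q (lt_of_lt_of_le hc hq)).le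

lemma hyp0F1_bound (q c : ℝ) (hc : 0 < c) (hq : c ≤ q) (z : ℂ) :
    ‖hyp0F1 q z‖ ≤ Real.exp (‖z‖ / c) := by
  have hqpos : 0 < q := lt_of_lt_of_le hc hq
  have hterm : ∀ l : ℕ,
      ‖z ^ l / ((((ascPochhammer ℝ l).eval q * (l.factorial : ℝ) : ℝ)) : ℂ)‖
        ≤ (‖z‖ / c) ^ l / (l.factorial : ℝ) := by
    intro l
    have hp := ascPochhammer_pos l q hqpos
    have hpc := ascPochhammer_ge_pow q c hc hq l
    have hf : (0 : ℝ) < (l.factorial : ℝ) := by positivity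
    rw [norm_div, norm_pow, Complex.norm_real, Real.norm_eq_abs,
      abs_of_pos (by positivity), div_pow, div_div]
    apply div_le_div_of_nonneg_left (by positivity) (by positivity)
    calc c ^ l * (l.factorial : ℝ) ≤ (ascPochhammer ℝ l).eval q * (l.factorial : ℝ) :=
          mul_le_mul_of_nonneg_right hpc hf.le
      _ = _ := rfl
  have hsum : Summable fun l : ℕ => (‖z‖ / c) ^ l / (l.factorial : ℝ) :=
    Real.summable_pow_div_factorial _
  calc ‖hyp0F1 q z‖
      ≤ ∑' l : ℕ, (‖z‖ / c) ^ l / (l.factorial : ℝ) :=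
        tsum_of_norm_bounded hsum.hasSum hterm
    _ = Real.exp (‖z‖ / c) := by
        rw [Real.exp_eq_exp_ℝ, NormedSpace.exp_eq_tsum_div]

/-- For `k ∈ ℕ` and `z ∈ ℂ`,
`|₀F₁(−; k + 1/2; z)| ≤ exp(2|z|)` and `|₀F₁(−; k + 3/2; z)| ≤ exp(2|z|/3)`. -/
theorem stmt_19 (k : ℕ) (z : ℂ) :
    ‖hyp0F1 ((k : ℝ) + 1 / 2) z‖ ≤ Real.exp (2 * ‖z‖) ∧
      ‖hyp0F1 ((k : ℝ) + 3 / 2) z‖ ≤ Real.exp (2 * ‖z‖ / 3) := by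
  constructor
  · have := hyp0F1_bound ((k : ℝ) + 1 / 2) (1 / 2) (by norm_num) (le_add_of_nonneg_left (Nat.cast_nonneg k)) z
    calc ‖hyp0F1 ((k : ℝ) + 1 / 2) z‖ ≤ Real.exp (‖z‖ / (1 / 2)) := this
      _ = Real.exp (2 * ‖z‖) := by ring_nf
  · have := hyp0F1_bound ((k : ℝ) + 3 / 2) (3 / 2) (by norm_num) (le_add_of_nonneg_left (Nat.cast_nonneg k)) z
    calc ‖hyp0F1 ((k : ℝ) + 3 / 2) z‖ ≤ Real.exp (‖z‖ / (3 / 2)) := this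
      _ = Real.exp (2 * ‖z‖ / 3) := by ring_nf
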